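/- arXiv:2204.07197 — 3 statements merged into one kernel-verified Lean document; each statement's English description precedes it below -/
import Mathlib

section
/- Let ξ and τ be integrable real random variables on a probability space with τ ≥ 0 almost surely, and define g(x) := E[(τ − (ξ − x)_+)_+] and h(x) := E[(ξ − τ − x)_+]. Let c be a real with 0 < c < E[τ]. Then the set S := {x ∈ ℝ : g(x) ≤ c} is nonempty and bounded above, and x* := sup S satisfies g(x*) = c, and for every x ∈ S, h(x*) ≤ h(x). Thus x* minimizes the expected idling time h subject to the expected-waiting-time constraint g(x) ≤ c. -/
open MeasureTheory

/-- Solution of the response-time-constrained formulation: with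
`g(x) = E[(τ - (ξ - x)₊)₊]` the expected waiting time and `h(x) = E[(ξ - τ - x)₊]` the
expected idling time, for any budget `0 < c < E[τ]` the feasible set `S = {x : g(x) ≤ c}`
is nonempty and bounded above, its supremum `x*` satisfies `g(x*) = c`, and `x*`
minimizes `h` over `S`. -/
theorem stmt_11 {Ω : Type*} {mΩ : MeasurableSpace Ω} (μ : Measure Ω)
    [IsProbabilityMeasure μ]
    (ξ τ : Ω → ℝ) (hξ : Integrable ξ μ) (hτ : Integrable τ μ)
    (hτ0 : ∀ᵐ ω ∂μ, 0 ≤ τ ω)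
    (c : ℝ) (hc0 : 0 < c) (hcτ : c < ∫ ω, τ ω ∂μ) :
    {x : ℝ | (∫ ω, max (τ ω - max (ξ ω - x) 0) 0 ∂μ) ≤ c}.Nonempty ∧
    BddAbove {x : ℝ | (∫ ω, max (τ ω - max (ξ ω - x) 0) 0 ∂μ) ≤ c} ∧
    (∫ ω, max (τ ω - max (ξ ω -
      sSup {x : ℝ | (∫ ω', max (τ ω' - max (ξ ω' - x) 0) 0 ∂μ) ≤ c}) 0) 0 ∂μ) = c ∧
    (∀ x ∈ {x : ℝ | (∫ ω, max (τ ω - max (ξ ω - x) 0) 0 ∂μ) ≤ c},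
      (∫ ω, max (ξ ω - τ ω -
        sSup {x : ℝ | (∫ ω', max (τ ω' - max (ξ ω' - x) 0) 0 ∂μ) ≤ c}) 0 ∂μ) ≤
      ∫ ω, max (ξ ω - τ ω - x) 0 ∂μ) := by
  set g : ℝ → ℝ := fun x => ∫ ω, max (τ ω - max (ξ ω - x) 0) 0 ∂μ with hgdef
  set S : Set ℝ := {x : ℝ | g x ≤ c} with hSdef
  -- boundedness of the integrand by |τ|
  have hbound : ∀ (x : ℝ) (ω : Ω), ‖max (τ ω - max (ξ ω - x) 0) 0‖ ≤ |τ ω| := by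
    intro x ω
    rw [Real.norm_eq_abs, abs_of_nonneg (le_max_right _ _)]
    have h1 : (0:ℝ) ≤ max (ξ ω - x) 0 := le_max_right _ _
    exact max_le (le_trans (by linarith) (le_abs_self (τ ω))) (abs_nonneg _)
  have hmeas : ∀ x : ℝ, AEStronglyMeasurable (fun ω => max (τ ω - max (ξ ω - x) 0) 0) μ :=
    fun x => ((hτ.1.sub ((hξ.1.sub aestronglyMeasurable_const).sup
      aestronglyMeasurable_const)).sup aestronglyMeasurable_const)
  have ig : ∀ x : ℝ, Integrable (fun ω => max (τ ω - max (ξ ω - x) 0) 0) μ := by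
    intro x
    refine hτ.mono (hmeas x) ?_
    filter_upwards with ω
    simpa using hbound x ω
  -- monotonicity of g
  have gmono : Monotone g := by
    intro x y hxy
    refine integral_mono (ig x) (ig y) fun ω => ?_
    have h1 : max (ξ ω - y) 0 ≤ max (ξ ω - x) 0 :=
      max_le_max (by linarith) le_rfl
    exact max_le_max (by linarith) le_rfl
  -- Lipschitz-type bound
  have glip : ∀ x y : ℝ, x ≤ y → g y ≤ g x + (y - x) := by
    intro x y hxy
    have key : g y ≤ ∫ ω, (max (τ ω - max (ξ ω - x) 0) 0 + (y - x)) ∂μ := by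
      refine integral_mono (ig y) ((ig x).add (integrable_const _)) fun ω => ?_
      have h1 : max (ξ ω - x) 0 ≤ max (ξ ω - y) 0 + (y - x) :=
        max_le (by linarith [le_max_left (ξ ω - y) (0:ℝ)])
          (by linarith [le_max_right (ξ ω - y) (0:ℝ)])
      refine max_le (by linarith [le_max_left (τ ω - max (ξ ω - x) 0) (0:ℝ)]) ?_
      have := le_max_right (τ ω - max (ξ ω - x) 0) (0:ℝ)
      linarith
    rwa [integral_add (ig x) (integrable_const _), integral_const, Measure.real, measure_univ,
      ENNReal.toReal_one, one_smul] at key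
  -- limit of g at +∞ is E[τ]
  have gtop : Filter.Tendsto g Filter.atTop (nhds (∫ ω, τ ω ∂μ)) := by
    refine tendsto_integral_filter_of_dominated_convergence (fun ω => |τ ω|)
      (Filter.Eventually.of_forall fun x => hmeas x)
      (Filter.Eventually.of_forall fun x =>
        Filter.Eventually.of_forall fun ω => hbound x ω)
      hτ.abs ?_
    filter_upwards [hτ0] with ω hω
    have hev : (fun x => max (τ ω - max (ξ ω - x) 0) 0)
        =ᶠ[Filter.atTop] fun _ => τ ω := by
      filter_upwards [Filter.eventually_ge_atTop (ξ ω)] with x hx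
      rw [max_eq_right (by linarith : ξ ω - x ≤ 0), sub_zero, max_eq_left hω]
    exact Filter.Tendsto.congr' hev.symm tendsto_const_nhds
  -- limit of g at -∞ is 0
  have gbot : Filter.Tendsto g Filter.atBot (nhds 0) := by
    have key : Filter.Tendsto g Filter.atBot (nhds (∫ _ω, (0:ℝ) ∂μ)) := by
      refine tendsto_integral_filter_of_dominated_convergence (fun ω => |τ ω|)
        (Filter.Eventually.of_forall fun x => hmeas x)
        (Filter.Eventually.of_forall fun x =>
          Filter.Eventually.of_forall fun ω => hbound x ω)
        hτ.abs ?_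
      filter_upwards [hτ0] with ω hω
      have hev : (fun x => max (τ ω - max (ξ ω - x) 0) 0)
          =ᶠ[Filter.atBot] fun _ => (0:ℝ) := by
        filter_upwards [Filter.eventually_le_atBot (ξ ω - τ ω)] with x hx
        rw [max_eq_left (by linarith : (0:ℝ) ≤ ξ ω - x)]
        exact max_eq_right (by linarith)
      exact Filter.Tendsto.congr' hev.symm tendsto_const_nhds
    simpa using key
  -- S is nonempty
  have hSne : S.Nonempty := by
    obtain ⟨x1, hx1⟩ := (gbot.eventually_lt_const hc0).exists
    exact ⟨x1, le_of_lt hx1⟩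
  -- S is bounded above
  obtain ⟨x0, hx0⟩ := (gtop.eventually_const_lt hcτ).exists
  have hSbdd : BddAbove S := by
    refine ⟨x0, fun x hx => ?_⟩
    by_contra h
    push_neg at h
    exact absurd (le_trans (gmono h.le) hx) (not_le.2 hx0)
  -- g (sSup S) = c
  have hgsup : g (sSup S) = c := by
    have hle : g (sSup S) ≤ c := by
      refine le_of_forall_pos_le_add fun ε hε => ?_
      obtain ⟨y, hyS, hy⟩ := exists_lt_of_lt_csSup hSne
        (by linarith : sSup S - ε < sSup S)
      have hyle : y ≤ sSup S := le_csSup hSbdd hyS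
      have := glip y (sSup S) hyle
      have hyc : g y ≤ c := hyS
      linarith
    rcases lt_or_eq_of_le hle with hlt | heq
    · exfalso
      have hd : (0:ℝ) < c - g (sSup S) := by linarith
      have hmem : (sSup S + (c - g (sSup S))) ∈ S := by
        have := glip (sSup S) (sSup S + (c - g (sSup S))) (by linarith)
        show g _ ≤ c
        linarith
      have := le_csSup hSbdd hmem
      linarith
    · exact heq
  -- integrability for h
  have ih : ∀ x : ℝ, Integrable (fun ω => max (ξ ω - τ ω - x) 0) μ := by
    intro x
    refine ((hξ.sub hτ).sub (integrable_const x)).mono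
      (((hξ.1.sub hτ.1).sub aestronglyMeasurable_const).sup aestronglyMeasurable_const) ?_
    filter_upwards with ω
    simp only [Real.norm_eq_abs]
    rw [abs_of_nonneg (le_max_right _ _)]
    exact max_le (le_abs_self _) (abs_nonneg _)
  refine ⟨hSne, hSbdd, hgsup, fun x hx => ?_⟩
  have hxle : x ≤ sSup S := le_csSup hSbdd hx
  exact integral_mono (ih (sSup S)) (ih x) fun ω => max_le_max (by linarith) le_rfl
end

section
/- Let ξ and τ be integrable real random variables on a probability space with τ ≥ 0 almost surely, and define g(x) := E[(τ − (ξ − x)_+)_+] and h(x) := E[(ξ − τ − x)_+]. Let c > 0 be a real. (i) If h(0) = E[(ξ − τ)_+] ≤ c, then x* = 0 lies in T := {x ≥ 0 : h(x) ≤ c} and g(0) ≤ g(x) for every x ∈ T. (ii) If h(0) > c, then T is nonempty, and x* := inf T satisfies h(x*) = c and g(x*) ≤ g(x) for every x ∈ T. -/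
open MeasureTheory Filter Topology

section aux

variable {Ω : Type*} {mΩ : MeasurableSpace Ω} {μ : Measure Ω} [IsProbabilityMeasure μ]
variable {ξ τ : Ω → ℝ}

lemma intH (hξ : Integrable ξ μ) (hτ : Integrable τ μ) (x : ℝ) :
    Integrable (fun ω => max (ξ ω - τ ω - x) 0) μ :=
  ((hξ.sub hτ).sub (integrable_const x)).pos_part

lemma intG (hξ : Integrable ξ μ) (hτ : Integrable τ μ) (x : ℝ) :
    Integrable (fun ω => max (τ ω - max (ξ ω - x) 0) 0) μ :=
  (hτ.sub (hξ.sub (integrable_const x)).pos_part).pos_part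

/-- h is antitone -/
lemma h_anti (hξ : Integrable ξ μ) (hτ : Integrable τ μ) {x y : ℝ} (hxy : x ≤ y) :
    (∫ ω, max (ξ ω - τ ω - y) 0 ∂μ) ≤ ∫ ω, max (ξ ω - τ ω - x) 0 ∂μ := by
  refine integral_mono (intH hξ hτ y) (intH hξ hτ x) fun ω => ?_
  exact max_le_max (by linarith) le_rfl

/-- g is monotone -/
lemma g_mono (hξ : Integrable ξ μ) (hτ : Integrable τ μ) {x y : ℝ} (hxy : x ≤ y) :
    (∫ ω, max (τ ω - max (ξ ω - x) 0) 0 ∂μ) ≤ ∫ ω, max (τ ω - max (ξ ω - y) 0) 0 ∂μ := by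
  refine integral_mono (intG hξ hτ x) (intG hξ hτ y) fun ω => ?_
  refine max_le_max (sub_le_sub le_rfl (max_le_max (by linarith) le_rfl)) le_rfl

/-- h is 1-Lipschitz -/
lemma h_lip (hξ : Integrable ξ μ) (hτ : Integrable τ μ) :
    LipschitzWith 1 (fun x : ℝ => ∫ ω, max (ξ ω - τ ω - x) 0 ∂μ) := by
  refine LipschitzWith.of_dist_le_mul fun x y => ?_
  simp only [Real.dist_eq, NNReal.coe_one, one_mul]
  rw [← integral_sub (intH hξ hτ x) (intH hξ hτ y)]
  calc |∫ ω, (max (ξ ω - τ ω - x) 0 - max (ξ ω - τ ω - y) 0) ∂μ|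
      ≤ ∫ ω, |max (ξ ω - τ ω - x) 0 - max (ξ ω - τ ω - y) 0| ∂μ := by
        simpa [Real.norm_eq_abs] using
          norm_integral_le_integral_norm (fun ω => max (ξ ω - τ ω - x) 0 - max (ξ ω - τ ω - y) 0)
    _ ≤ ∫ _ω, |x - y| ∂μ := by
        refine integral_mono ((intH hξ hτ x).sub (intH hξ hτ y)).abs (integrable_const _)
          fun ω => ?_
        calc |max (ξ ω - τ ω - x) 0 - max (ξ ω - τ ω - y) 0|
            ≤ |(ξ ω - τ ω - x) - (ξ ω - τ ω - y)| := abs_max_sub_max_le_abs _ _ _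
          _ = |x - y| := by rw [show (ξ ω - τ ω - x) - (ξ ω - τ ω - y) = -(x - y) by ring,
                abs_neg]
    _ = |x - y| := by simp

/-- h tends to below c for large x -/
lemma h_small (hξ : Integrable ξ μ) (hτ : Integrable τ μ) (hτ0 : ∀ᵐ ω ∂μ, 0 ≤ τ ω)
    {c : ℝ} (hc : 0 < c) :
    ∃ x : ℝ, 0 ≤ x ∧ (∫ ω, max (ξ ω - τ ω - x) 0 ∂μ) ≤ c := by
  have hlim : Tendsto (fun n : ℕ => ∫ ω, max (ξ ω - (n : ℝ)) 0 ∂μ) atTop (𝓝 0) := by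
    have := tendsto_integral_of_dominated_convergence (fun ω => |ξ ω|)
      (F := fun (n : ℕ) ω => max (ξ ω - (n : ℝ)) 0) (f := fun _ => (0 : ℝ))
      (fun n => ((hξ.sub (integrable_const _)).pos_part).aestronglyMeasurable)
      hξ.abs
      (fun n => Filter.Eventually.of_forall fun ω => by
        rw [Real.norm_eq_abs, abs_of_nonneg (le_max_right _ _)]
        exact max_le (by simpa using (sub_le_self (ξ ω) (by positivity)).trans (le_abs_self _))
          (abs_nonneg _))
      (Filter.Eventually.of_forall fun ω => ?_)
    · simpa using this
    · -- pointwise convergence to 0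
      have h2 : (fun n : ℕ => max (ξ ω - (n : ℝ)) 0) =ᶠ[atTop] fun _ => (0 : ℝ) := by
        filter_upwards [tendsto_natCast_atTop_atTop.eventually_ge_atTop (ξ ω)] with n hn
        exact max_eq_right (by linarith)
      exact Tendsto.congr' h2.symm tendsto_const_nhds
  obtain ⟨n, hn⟩ := (hlim.eventually_lt_const hc).exists
  refine ⟨n, Nat.cast_nonneg n, ?_⟩
  refine le_trans ?_ hn.le
  refine integral_mono_ae (intH hξ hτ n) ((hξ.sub (integrable_const _)).pos_part) ?_
  filter_upwards [hτ0] with ω hω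
  exact max_le_max (by linarith) le_rfl

end aux

/-- Solution of the cost-constrained formulation: with
`g(x) = E[(τ - (ξ - x)₊)₊]` the expected waiting time and `h(x) = E[(ξ - τ - x)₊]` the
expected idling time, and `T = {x ≥ 0 : h(x) ≤ c}`:
(i) if `h(0) ≤ c` then `x* = 0` is feasible and minimizes `g` over `T`;
(ii) if `h(0) > c` then `T` is nonempty, and `x* = inf T` satisfies `h(x*) = c` and
minimizes `g` over `T`. -/
theorem stmt_12 {Ω : Type*} {mΩ : MeasurableSpace Ω} (μ : Measure Ω)
    [IsProbabilityMeasure μ]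
    (ξ τ : Ω → ℝ) (hξ : Integrable ξ μ) (hτ : Integrable τ μ)
    (hτ0 : ∀ᵐ ω ∂μ, 0 ≤ τ ω) (c : ℝ) (hc : 0 < c) :
    ((∫ ω, max (ξ ω - τ ω - 0) 0 ∂μ) ≤ c →
      (0 : ℝ) ∈ {x : ℝ | 0 ≤ x ∧ (∫ ω, max (ξ ω - τ ω - x) 0 ∂μ) ≤ c} ∧
      ∀ x ∈ {x : ℝ | 0 ≤ x ∧ (∫ ω, max (ξ ω - τ ω - x) 0 ∂μ) ≤ c},
        (∫ ω, max (τ ω - max (ξ ω - 0) 0) 0 ∂μ) ≤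
          ∫ ω, max (τ ω - max (ξ ω - x) 0) 0 ∂μ) ∧
    (c < (∫ ω, max (ξ ω - τ ω - 0) 0 ∂μ) →
      {x : ℝ | 0 ≤ x ∧ (∫ ω, max (ξ ω - τ ω - x) 0 ∂μ) ≤ c}.Nonempty ∧
      (∫ ω, max (ξ ω - τ ω -
        sInf {x : ℝ | 0 ≤ x ∧ (∫ ω', max (ξ ω' - τ ω' - x) 0 ∂μ) ≤ c}) 0 ∂μ) = c ∧
      ∀ x ∈ {x : ℝ | 0 ≤ x ∧ (∫ ω, max (ξ ω - τ ω - x) 0 ∂μ) ≤ c},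
        (∫ ω, max (τ ω - max (ξ ω -
          sInf {x : ℝ | 0 ≤ x ∧ (∫ ω', max (ξ ω' - τ ω' - x) 0 ∂μ) ≤ c}) 0) 0 ∂μ) ≤
          ∫ ω, max (τ ω - max (ξ ω - x) 0) 0 ∂μ) := by
  set h : ℝ → ℝ := fun x => ∫ ω, max (ξ ω - τ ω - x) 0 ∂μ with hh
  set T : Set ℝ := {x : ℝ | 0 ≤ x ∧ h x ≤ c} with hT
  constructor
  · intro h0
    refine ⟨⟨le_rfl, h0⟩, fun x hx => g_mono hξ hτ hx.1⟩
  · intro h0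
    have hbdd : BddBelow T := ⟨0, fun x hx => hx.1⟩
    have hne : T.Nonempty := by
      obtain ⟨x, hx0, hxc⟩ := h_small hξ hτ hτ0 hc
      exact ⟨x, hx0, hxc⟩
    have hcont : Continuous h := (h_lip hξ hτ).continuous
    have hclosed : IsClosed T := by
      have : T = {x : ℝ | 0 ≤ x} ∩ {x : ℝ | h x ≤ c} := rfl
      rw [this]
      exact (isClosed_le continuous_const continuous_id).inter
        (isClosed_le hcont continuous_const)
    have hmem : sInf T ∈ T := hclosed.csInf_mem hne hbdd
    have hpos : 0 < sInf T := by
      rcases lt_or_eq_of_le hmem.1 with hlt | heq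
      · exact hlt
      · exfalso; rw [← heq] at hmem; exact absurd hmem.2 (not_le.mpr h0)
    have heq : h (sInf T) = c := by
      refine le_antisymm hmem.2 ?_
      by_contra hlt
      push_neg at hlt
      -- continuity gives a smaller feasible point
      have : ∀ᶠ y in 𝓝 (sInf T), h y < c := hcont.continuousAt.eventually_lt continuous_const.continuousAt hlt
      obtain ⟨δ, hδ, hδ'⟩ := Metric.eventually_nhds_iff.mp this
      set y := max (sInf T - δ / 2) (sInf T / 2) with hy
      have hylt : y < sInf T := by
        apply max_lt (by linarith) (by linarith)
      have hy0 : 0 ≤ y := le_trans (by linarith) (le_max_right _ _)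
      have hyd : dist y (sInf T) < δ := by
        rw [Real.dist_eq, abs_of_nonpos (by linarith)]
        have := le_max_left (sInf T - δ / 2) (sInf T / 2)
        linarith
      have : y ∈ T := ⟨hy0, (hδ' hyd).le⟩
      exact absurd (csInf_le hbdd this) (not_le.mpr hylt)
    exact ⟨hne, heq, fun x hx => g_mono hξ hτ (csInf_le hbdd hx)⟩
end

section
/- Let R ≥ 1 be a natural number and let ξ_1, …, ξ_R ∈ ℝ and τ_1, …, τ_R ≥ 0 be reals. Define Ê(x) := (1/R) ∑_{r=1}^R (τ_r − (ξ_r − x)_+)_+ for x ∈ ℝ. Then: (i) Ê is nondecreasing; (ii) Ê is 1-Lipschitz; and (iii) for every open interval I disjoint from the finite set {ξ_r : 1 ≤ r ≤ R} ∪ {ξ_r − τ_r : 1 ≤ r ≤ R}, Ê is affine on I with slope (1/R) · |{r : ξ_r − τ_r < x₀ < ξ_r}| for any x₀ ∈ I; that is, Ê(y) − Ê(x) = (y − x) · (1/R) · |{r : ξ_r − τ_r < x₀ < ξ_r}| for all x, y, x₀ ∈ I. -/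
open Finset

lemma mc_term_eq (ξ τ a b x y x₀ : ℝ) (hτ : 0 ≤ τ)
    (hξ : ξ ∉ Set.Ioo a b) (hξτ : ξ - τ ∉ Set.Ioo a b)
    (hx : x ∈ Set.Ioo a b) (hy : y ∈ Set.Ioo a b) (hx₀ : x₀ ∈ Set.Ioo a b) :
    max (τ - max (ξ - y) 0) 0 - max (τ - max (ξ - x) 0) 0 =
      (y - x) * (if ξ - τ < x₀ ∧ x₀ < ξ then (1 : ℝ) else 0) := by
  simp only [Set.mem_Ioo, not_and_or, not_lt] at hξ hξτ hx hy hx₀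
  obtain ⟨hx1, hx2⟩ := hx
  obtain ⟨hy1, hy2⟩ := hy
  obtain ⟨h01, h02⟩ := hx₀
  rcases hξ with h | h
  · have e1 : max (ξ - x) 0 = 0 := max_eq_right (by linarith)
    have e2 : max (ξ - y) 0 = 0 := max_eq_right (by linarith)
    rw [e1, e2, if_neg (by push_neg; intro _; linarith)]
    ring
  · have e1 : max (ξ - x) 0 = ξ - x := max_eq_left (by linarith)
    have e2 : max (ξ - y) 0 = ξ - y := max_eq_left (by linarith)
    rw [e1, e2]
    rcases hξτ with h2 | h2
    · have f1 : max (τ - (ξ - x)) 0 = τ - (ξ - x) := max_eq_left (by linarith)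
      have f2 : max (τ - (ξ - y)) 0 = τ - (ξ - y) := max_eq_left (by linarith)
      rw [f1, f2, if_pos ⟨by linarith, by linarith⟩]
      ring
    · have f1 : max (τ - (ξ - x)) 0 = 0 := max_eq_right (by linarith)
      have f2 : max (τ - (ξ - y)) 0 = 0 := max_eq_right (by linarith)
      rw [f1, f2, if_neg (by push_neg; intro hc; linarith)]
      ring

/-- Properties of the Monte Carlo estimate `Ê(x) = (1/R) ∑_r (τ_r - (ξ_r - x)₊)₊`:
it is nondecreasing, 1-Lipschitz, and affine on every open interval avoiding the
breakpoints `{ξ_r}` and `{ξ_r - τ_r}`, with slope `|{r : ξ_r - τ_r < x₀ < ξ_r}| / R`. -/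
theorem stmt_18 (R : ℕ) (hR : 1 ≤ R) (ξ τ : Fin R → ℝ) (hτ : ∀ r, 0 ≤ τ r) :
    Monotone (fun x : ℝ => (1 / (R : ℝ)) * ∑ r, max (τ r - max (ξ r - x) 0) 0) ∧
    LipschitzWith 1 (fun x : ℝ => (1 / (R : ℝ)) * ∑ r, max (τ r - max (ξ r - x) 0) 0) ∧
    (∀ a b : ℝ, (∀ r, ξ r ∉ Set.Ioo a b) → (∀ r, ξ r - τ r ∉ Set.Ioo a b) →
      ∀ x ∈ Set.Ioo a b, ∀ y ∈ Set.Ioo a b, ∀ x₀ ∈ Set.Ioo a b,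
        (1 / (R : ℝ)) * ∑ r, max (τ r - max (ξ r - y) 0) 0 -
          (1 / (R : ℝ)) * ∑ r, max (τ r - max (ξ r - x) 0) 0 =
        (y - x) * ((1 / (R : ℝ)) *
          ((Finset.univ.filter fun r => ξ r - τ r < x₀ ∧ x₀ < ξ r).card : ℝ))) := by
  have hRpos : (0 : ℝ) < R := by exact_mod_cast hR
  refine ⟨?_, ?_, ?_⟩
  · intro x y hxy
    have : ∀ r : Fin R, max (τ r - max (ξ r - x) 0) 0 ≤ max (τ r - max (ξ r - y) 0) 0 := by
      intro r
      gcongr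
    exact mul_le_mul_of_nonneg_left (Finset.sum_le_sum fun r _ => this r)
      (by positivity)
  · rw [lipschitzWith_iff_dist_le_mul]
    intro x y
    simp only [Real.dist_eq, NNReal.coe_one, one_mul]
    have hterm : ∀ r : Fin R,
        |max (τ r - max (ξ r - x) 0) 0 - max (τ r - max (ξ r - y) 0) 0| ≤ |x - y| := by
      intro r
      calc |max (τ r - max (ξ r - x) 0) 0 - max (τ r - max (ξ r - y) 0) 0|
          ≤ |(τ r - max (ξ r - x) 0) - (τ r - max (ξ r - y) 0)| :=
            abs_max_sub_max_le_abs _ _ _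
        _ = |max (ξ r - y) 0 - max (ξ r - x) 0| := by ring_nf
        _ ≤ |(ξ r - y) - (ξ r - x)| := abs_max_sub_max_le_abs _ _ _
        _ = |x - y| := by rw [show (ξ r - y) - (ξ r - x) = x - y by ring]
    calc |(1 / (R : ℝ)) * ∑ r, max (τ r - max (ξ r - x) 0) 0 -
            (1 / (R : ℝ)) * ∑ r, max (τ r - max (ξ r - y) 0) 0|
        = (1 / (R : ℝ)) * |∑ r, (max (τ r - max (ξ r - x) 0) 0 -
            max (τ r - max (ξ r - y) 0) 0)| := by
          rw [Finset.sum_sub_distrib, ← mul_sub, abs_mul, abs_of_nonneg (by positivity)]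
      _ ≤ (1 / (R : ℝ)) * ∑ r, |max (τ r - max (ξ r - x) 0) 0 -
            max (τ r - max (ξ r - y) 0) 0| := by
          gcongr
          exact Finset.abs_sum_le_sum_abs _ _
      _ ≤ (1 / (R : ℝ)) * ∑ _r : Fin R, |x - y| := by
          exact mul_le_mul_of_nonneg_left (Finset.sum_le_sum fun r _ => hterm r)
            (by positivity)
      _ = |x - y| := by
          simp [Finset.sum_const, Finset.card_univ]
          field_simp
  · intro a b hξ hξτ x hx y hy x₀ hx₀
    rw [← mul_sub, ← Finset.sum_sub_distrib]
    have : ∑ r, (max (τ r - max (ξ r - y) 0) 0 - max (τ r - max (ξ r - x) 0) 0) =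
        (y - x) * ((Finset.univ.filter fun r => ξ r - τ r < x₀ ∧ x₀ < ξ r).card : ℝ) := by
      rw [← Finset.sum_boole, Finset.mul_sum]
      exact Finset.sum_congr rfl fun r _ =>
        mc_term_eq (ξ r) (τ r) a b x y x₀ (hτ r) (hξ r) (hξτ r) hx hy hx₀
    rw [this]
    ring
end
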